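/- Let ν > 0, let s ∈ ℂ with Re s > 0, and set λ = ν s². Let f : [0,∞) → ℂ be continuous and bounded. Define v(y) = −(1/(2sν)) ∫_y^∞ f(τ) e^{s(y−τ)} dτ − (1/(2sν)) ∫_0^y f(τ) e^{−s(y−τ)} dτ + (1/(2sν)) ∫_0^∞ f(τ) e^{−s(y+τ)} dτ. Then v is twice continuously differentiable on [0,∞), satisfies ν v''(y) − λ v(y) = f(y) for all y ≥ 0, satisfies v(0) = 0, and for all y ≥ 0 one has |v(y)| ≤ (sup_{τ ≥ 0} |f(τ)|) / (ν |s| · Re s). -/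

import Mathlib

open MeasureTheory Set

private lemma hd_cexp (s : ℂ) (y : ℝ) :
    HasDerivAt (fun y : ℝ => Complex.exp (s * y)) (s * Complex.exp (s * y)) y := by
  have h1 : HasDerivAt (fun z : ℂ => Complex.exp (s * z)) (s * Complex.exp (s * y)) (y : ℂ) := by
    have := ((hasDerivAt_id' (y : ℂ)).const_mul s).cexp
    simpa [mul_comm] using this
  exact h1.comp_ofReal

private lemma int_exp_neg_Ioi {b : ℝ} (hb : 0 < b) (y : ℝ) :
    ∫ τ in Ioi y, Real.exp (-(b * τ)) = Real.exp (-(b * y)) / b := by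
  have hint : IntegrableOn (fun τ => Real.exp (-(b * τ))) (Ioi y) := by
    simpa [neg_mul] using exp_neg_integrableOn_Ioi y hb
  have hd : ∀ x ∈ Ici y, HasDerivAt (fun τ => -Real.exp (-(b * τ)) / b)
      (Real.exp (-(b * x))) x := by
    intro x _
    have h1 : HasDerivAt (fun τ : ℝ => -(b * τ)) (-b) x := by
      simpa using (hasDerivAt_id x).const_mul (-b)
    have h2 := ((Real.hasDerivAt_exp (-(b * x))).comp x h1).neg.div_const b
    refine h2.congr_deriv ?_
    rw [div_eq_iff hb.ne']; ring
  have ht : Filter.Tendsto (fun τ => -Real.exp (-(b * τ)) / b) Filter.atTop (nhds 0) := by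
    have h0 : Filter.Tendsto (fun τ : ℝ => -(b * τ)) Filter.atTop Filter.atBot := by
      exact Filter.tendsto_neg_atBot_iff.2 (Filter.Tendsto.const_mul_atTop hb Filter.tendsto_id)
    have := (Real.tendsto_exp_atBot.comp h0).neg.div_const b
    simpa using this
  have := integral_Ioi_of_hasDerivAt_of_tendsto' hd hint ht
  rw [this]; ring

private lemma int_exp_pos {b : ℝ} (hb : 0 < b) (y : ℝ) :
    ∫ τ in (0:ℝ)..y, Real.exp (b * τ) = (Real.exp (b * y) - 1) / b := by
  have hd : ∀ x ∈ uIcc (0:ℝ) y, HasDerivAt (fun τ => Real.exp (b * τ) / b)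
      (Real.exp (b * x)) x := by
    intro x _
    have h1 : HasDerivAt (fun τ : ℝ => b * τ) b x := by
      simpa using (hasDerivAt_id x).const_mul b
    have h2 := ((Real.hasDerivAt_exp (b * x)).comp x h1).div_const b
    refine h2.congr_deriv ?_
    exact mul_div_cancel_right₀ _ hb.ne'
  rw [intervalIntegral.integral_eq_sub_of_hasDerivAt hd
    ((Real.continuous_exp.comp (continuous_const.mul continuous_id)).intervalIntegrable 0 y)]
  simp
  ring

theorem stmt_0 (ν : ℝ) (hν : 0 < ν) (s : ℂ) (hs : 0 < s.re)
    (f : ℝ → ℂ) (hf_cont : ContinuousOn f (Ici 0))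
    (hf_bdd : BddAbove (range fun τ : Ici (0:ℝ) => ‖f τ.1‖))
    (v : ℝ → ℂ)
    (hv : ∀ y : ℝ, v y =
      -(1 / (2 * s * ν)) * (∫ τ in Ioi y, f τ * Complex.exp (s * ((y : ℂ) - (τ : ℂ))))
      - (1 / (2 * s * ν)) * (∫ τ in (0:ℝ)..y, f τ * Complex.exp (-s * ((y : ℂ) - (τ : ℂ))))
      + (1 / (2 * s * ν)) * ∫ τ in Ioi (0:ℝ), f τ * Complex.exp (-s * ((y : ℂ) + (τ : ℂ)))) :
    ContDiffOn ℝ 2 v (Ici 0) ∧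
    (∀ y ∈ Ici (0:ℝ),
      (ν : ℂ) * derivWithin (derivWithin v (Ici 0)) (Ici 0) y - (ν : ℂ) * s ^ 2 * v y = f y) ∧
    v 0 = 0 ∧
    (∀ y ∈ Ici (0:ℝ),
      ‖v y‖ ≤ (⨆ τ : Ici (0:ℝ), ‖f τ.1‖) / (ν * ‖s‖ * s.re)) := by
  have hs0 : s ≠ 0 := fun h => by rw [h] at hs; simp at hs
  have hν0 : (ν : ℂ) ≠ 0 := Complex.ofReal_ne_zero.2 hν.ne'
  set c : ℂ := 1 / (2 * s * ν) with hc
  set M : ℝ := ⨆ τ : Ici (0:ℝ), ‖f τ.1‖ with hMdef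
  set fc : ℝ → ℂ := fun y => f (max y 0) with hfc
  have hfc_cont : Continuous fc :=
    hf_cont.comp_continuous (continuous_id.max continuous_const) fun x => le_max_right x 0
  have hfc_eq : ∀ y : ℝ, 0 ≤ y → fc y = f y := fun y hy => by
    simp [hfc, max_eq_left hy]
  have hbM : ∀ y : ℝ, ‖fc y‖ ≤ M := fun y =>
    le_ciSup hf_bdd (⟨max y 0, le_max_right y 0⟩ : Ici (0:ℝ))
  have hM0 : 0 ≤ M := le_trans (norm_nonneg _) (hbM 0)
  set E : ℝ → ℂ := fun y => Complex.exp (s * y) with hEdef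
  set E' : ℝ → ℂ := fun y => Complex.exp (-(s * y)) with hE'def
  have hEE' : ∀ y, E y * E' y = 1 := fun y => by
    rw [hEdef, hE'def, ← Complex.exp_add]; simp
  have hE_cont : Continuous E := Complex.continuous_exp.comp
    (continuous_const.mul Complex.continuous_ofReal)
  have hE'_cont : Continuous E' := Complex.continuous_exp.comp
    (continuous_const.mul Complex.continuous_ofReal).neg
  have hE_norm : ∀ y : ℝ, ‖E y‖ = Real.exp (s.re * y) := fun y => by
    rw [hEdef, Complex.norm_exp]
    norm_num [Complex.mul_re]
  have hE'_norm : ∀ y : ℝ, ‖E' y‖ = Real.exp (-(s.re * y)) := fun y => by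
    rw [hE'def, Complex.norm_exp]
    norm_num [Complex.mul_re]
  have hE_d : ∀ y, HasDerivAt E (s * E y) y := fun y => hd_cexp s y
  have hE'_d : ∀ y, HasDerivAt E' (-s * E' y) y := fun y => by
    have := hd_cexp (-s) y
    simpa [hE'def, neg_mul] using this
  set g : ℝ → ℂ := fun τ => fc τ * E' τ with hgdef
  set h : ℝ → ℂ := fun τ => fc τ * E τ with hhdef
  have hg_cont : Continuous g := hfc_cont.mul hE'_cont
  have hh_cont : Continuous h := hfc_cont.mul hE_cont
  have hg_norm : ∀ τ : ℝ, ‖g τ‖ ≤ M * Real.exp (-(s.re * τ)) := fun τ => by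
    rw [hgdef]
    calc ‖fc τ * E' τ‖ = ‖fc τ‖ * ‖E' τ‖ := norm_mul _ _
    _ ≤ M * Real.exp (-(s.re * τ)) := by
        rw [hE'_norm]
        exact mul_le_mul_of_nonneg_right (hbM τ) (Real.exp_nonneg _)
  have hexp_int : ∀ y : ℝ, IntegrableOn (fun τ => M * Real.exp (-(s.re * τ))) (Ioi y) := by
    intro y
    simpa [neg_mul, IntegrableOn] using (exp_neg_integrableOn_Ioi y hs).const_mul M
  have hg_int : ∀ y : ℝ, IntegrableOn g (Ioi y) := fun y =>
    Integrable.mono' (hexp_int y) hg_cont.aestronglyMeasurable.restrict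
      (ae_of_all _ fun τ => hg_norm τ)
  set K : ℂ := ∫ τ in Ioi (0:ℝ), g τ with hKdef
  set G : ℝ → ℂ := fun y => ∫ τ in (0:ℝ)..y, g τ with hGdef
  set H : ℝ → ℂ := fun y => ∫ τ in (0:ℝ)..y, h τ with hHdef
  have hG : ∀ y, HasDerivAt G (g y) y := fun y =>
    intervalIntegral.integral_hasDerivAt_right (hg_cont.intervalIntegrable 0 y)
      hg_cont.aestronglyMeasurable.stronglyMeasurableAtFilter hg_cont.continuousAt
  have hH : ∀ y, HasDerivAt H (h y) y := fun y =>
    intervalIntegral.integral_hasDerivAt_right (hh_cont.intervalIntegrable 0 y)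
      hh_cont.aestronglyMeasurable.stronglyMeasurableAtFilter hh_cont.continuousAt
  have hG_cont : Continuous G := continuous_iff_continuousAt.2 fun y => (hG y).continuousAt
  have hH_cont : Continuous H := continuous_iff_continuousAt.2 fun y => (hH y).continuousAt
  have hsplit : ∀ y : ℝ, 0 ≤ y → K - G y = ∫ τ in Ioi y, g τ := by
    intro y hy
    have hu : Ioc (0:ℝ) y ∪ Ioi y = Ioi (0:ℝ) := Ioc_union_Ioi_eq_Ioi hy
    have hsum := setIntegral_union (Ioc_disjoint_Ioi le_rfl) measurableSet_Ioi
      ((hg_int 0).mono_set Ioc_subset_Ioi_self) (hg_int y) (f := g) (μ := volume)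
    rw [hu] at hsum
    rw [hKdef, hsum, hGdef]
    simp only [intervalIntegral.integral_of_le hy]
    ring
  -- rewrite v in terms of the nice functions
  set w : ℝ → ℂ := fun y => -c * (E y * (K - G y)) - c * (E' y * H y) + c * (E' y * K)
    with hwdef
  have hvw : ∀ y ∈ Ici (0:ℝ), v y = w y := by
    intro y hy
    have hA : (∫ τ in Ioi y, f τ * Complex.exp (s * ((y : ℂ) - τ))) = E y * (K - G y) := by
      rw [hsplit y hy, ← integral_const_mul]
      refine setIntegral_congr_fun measurableSet_Ioi fun τ hτ => ?_
      have h0τ : (0:ℝ) ≤ τ := le_of_lt (lt_of_le_of_lt hy hτ)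
      rw [show s * ((y : ℂ) - τ) = s * y + -(s * τ) by ring, Complex.exp_add,
        ← hfc_eq τ h0τ, hgdef, hEdef, hE'def]
      ring
    have hB : (∫ τ in (0:ℝ)..y, f τ * Complex.exp (-s * ((y : ℂ) - τ))) = E' y * H y := by
      rw [hHdef]
      simp only
      rw [← intervalIntegral.integral_const_mul]
      refine intervalIntegral.integral_congr fun τ hτ => ?_
      rw [uIcc_of_le hy] at hτ
      rw [show -s * ((y : ℂ) - τ) = -(s * y) + s * τ by ring, Complex.exp_add,
        ← hfc_eq τ hτ.1, hhdef, hEdef, hE'def]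
      ring
    have hC : (∫ τ in Ioi (0:ℝ), f τ * Complex.exp (-s * ((y : ℂ) + τ))) = E' y * K := by
      rw [hKdef, ← integral_const_mul]
      refine setIntegral_congr_fun measurableSet_Ioi fun τ hτ => ?_
      rw [show -s * ((y : ℂ) + τ) = -(s * y) + -(s * τ) by ring, Complex.exp_add,
        ← hfc_eq τ (le_of_lt hτ), hgdef, hE'def]
      ring
    rw [hv y, hA, hB, hC, hwdef]
  have hEg : ∀ y, E y * g y = fc y := fun y => by
    rw [hgdef, show E y * (fc y * E' y) = fc y * (E y * E' y) by ring, hEE', mul_one]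
  have hE'h : ∀ y, E' y * h y = fc y := fun y => by
    rw [hhdef, show E' y * (fc y * E y) = fc y * (E y * E' y) by ring, hEE', mul_one]
  set w1 : ℝ → ℂ := fun y =>
    -(c * s) * (E y * (K - G y)) + (c * s) * (E' y * H y) - (c * s) * (E' y * K) with hw1def
  set w2 : ℝ → ℂ := fun y =>
    -(c * s ^ 2) * (E y * (K - G y)) - (c * s ^ 2) * (E' y * H y) + (c * s ^ 2) * (E' y * K)
      + 2 * (c * s) * fc y with hw2def
  have hw_d : ∀ y, HasDerivAt w (w1 y) y := by
    intro y
    have d1 := (hE_d y).mul ((hG y).const_sub K)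
    have d2 := (hE'_d y).mul (hH y)
    have d3 := (hE'_d y).mul_const K
    have d := ((d1.const_mul (-c)).sub (d2.const_mul c)).add (d3.const_mul c)
    rw [hwdef]
    refine d.congr_deriv (Eq.symm ?_)
    rw [hw1def]
    have h2 := hEg y
    have h3 := hE'h y
    simp only
    linear_combination (-c) * h2 + c * h3
  have hw1_d : ∀ y, HasDerivAt w1 (w2 y) y := by
    intro y
    have d1 := (hE_d y).mul ((hG y).const_sub K)
    have d2 := (hE'_d y).mul (hH y)
    have d3 := (hE'_d y).mul_const K
    have d := ((d1.const_mul (-(c * s))).add (d2.const_mul (c * s))).sub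
      (d3.const_mul (c * s))
    rw [hw1def]
    refine d.congr_deriv (Eq.symm ?_)
    rw [hw2def]
    have h2 := hEg y
    have h3 := hE'h y
    simp only
    linear_combination (-(c * s)) * h2 - (c * s) * h3
  have hw2_cont : Continuous w2 := by
    rw [hw2def]
    exact (((continuous_const.mul (hE_cont.mul (continuous_const.sub hG_cont))).sub
      (continuous_const.mul (hE'_cont.mul hH_cont))).add
      (continuous_const.mul (hE'_cont.mul continuous_const))).add
      (continuous_const.mul hfc_cont)
  have hderiv_w : deriv w = w1 := funext fun y => (hw_d y).deriv
  have hderiv_w1 : deriv w1 = w2 := funext fun y => (hw1_d y).deriv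
  have hw_cd : ContDiff ℝ 2 w := by
    rw [show (2 : WithTop ℕ∞) = 1 + 1 by norm_num]
    refine contDiff_succ_iff_deriv.2 ⟨fun y => (hw_d y).differentiableAt, by simp, ?_⟩
    rw [hderiv_w]
    exact contDiff_one_iff_deriv.2 ⟨fun y => (hw1_d y).differentiableAt, by
      rw [hderiv_w1]; exact hw2_cont⟩
  refine ⟨hw_cd.contDiffOn.congr hvw, ?_, ?_, ?_⟩
  · -- the ODE
    intro y hy
    have e1 : EqOn (derivWithin v (Ici 0)) w1 (Ici 0) := by
      intro z hz
      rw [derivWithin_congr hvw (hvw z hz),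
        (hw_d z).hasDerivWithinAt.derivWithin (uniqueDiffOn_Ici 0 z hz)]
    rw [derivWithin_congr e1 (e1 hy),
      (hw1_d y).hasDerivWithinAt.derivWithin (uniqueDiffOn_Ici 0 y hy), hvw y hy,
      hw2def, hwdef, ← hfc_eq y hy]
    simp only
    have hcs : (ν : ℂ) * (2 * (c * s)) = 1 := by rw [hc]; field_simp
    linear_combination (fc y) * hcs
  · -- boundary value
    have hG0 : G 0 = 0 := by rw [hGdef]; simp
    have hH0 : H 0 = 0 := by rw [hHdef]; simp
    have hE0 : E 0 = 1 := by rw [hEdef]; simp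
    have hE'0 : E' 0 = 1 := by rw [hE'def]; simp
    rw [hvw 0 self_mem_Ici, hwdef]
    simp only
    rw [hG0, hH0, hE0, hE'0]
    ring
  · -- the bound
    intro y hy
    have hy' : (0:ℝ) ≤ y := hy
    have hIoibound : ∀ z : ℝ, ‖∫ τ in Ioi z, g τ‖ ≤ M * Real.exp (-(s.re * z)) / s.re := by
      intro z
      calc ‖∫ τ in Ioi z, g τ‖ ≤ ∫ τ in Ioi z, M * Real.exp (-(s.re * τ)) :=
            norm_integral_le_of_norm_le (hexp_int z) (ae_of_all _ fun τ => hg_norm τ)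
      _ = M * (Real.exp (-(s.re * z)) / s.re) := by
            rw [integral_const_mul, int_exp_neg_Ioi hs]
      _ = M * Real.exp (-(s.re * z)) / s.re := by ring
    have hT1 : ‖E y * (K - G y)‖ ≤ M / s.re := by
      rw [norm_mul, hE_norm, hsplit y hy']
      calc Real.exp (s.re * y) * ‖∫ τ in Ioi y, g τ‖
          ≤ Real.exp (s.re * y) * (M * Real.exp (-(s.re * y)) / s.re) :=
            mul_le_mul_of_nonneg_left (hIoibound y) (Real.exp_nonneg _)
      _ = M / s.re := by
            rw [show Real.exp (s.re * y) * (M * Real.exp (-(s.re * y)) / s.re)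
              = (Real.exp (s.re * y) * Real.exp (-(s.re * y))) * M / s.re by ring,
              ← Real.exp_add]
            simp
    have hT2 : ‖E' y * H y‖ ≤ Real.exp (-(s.re * y)) * (M * (Real.exp (s.re * y) - 1) / s.re) := by
      rw [norm_mul, hE'_norm]
      refine mul_le_mul_of_nonneg_left ?_ (Real.exp_nonneg _)
      rw [hHdef]
      calc ‖∫ τ in (0:ℝ)..y, h τ‖ ≤ ∫ τ in (0:ℝ)..y, ‖h τ‖ :=
            intervalIntegral.norm_integral_le_integral_norm hy'
      _ ≤ ∫ τ in (0:ℝ)..y, M * Real.exp (s.re * τ) := by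
            refine intervalIntegral.integral_mono_on hy'
              (hh_cont.norm.intervalIntegrable 0 y)
              ((continuous_const.mul (Real.continuous_exp.comp
                (continuous_const.mul continuous_id))).intervalIntegrable 0 y)
              fun τ _ => ?_
            rw [hhdef]
            calc ‖fc τ * E τ‖ = ‖fc τ‖ * ‖E τ‖ := norm_mul _ _
            _ ≤ M * Real.exp (s.re * τ) := by
                rw [hE_norm]
                exact mul_le_mul_of_nonneg_right (hbM τ) (Real.exp_nonneg _)
      _ = M * (Real.exp (s.re * y) - 1) / s.re := by
            rw [intervalIntegral.integral_const_mul, int_exp_pos hs]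
            ring
    have hT3 : ‖E' y * K‖ ≤ Real.exp (-(s.re * y)) * (M / s.re) := by
      rw [norm_mul, hE'_norm]
      refine mul_le_mul_of_nonneg_left ?_ (Real.exp_nonneg _)
      have := hIoibound 0
      rw [hKdef]
      simpa using this
    have hcnorm : ‖c‖ = 1 / (2 * ‖s‖ * ν) := by
      rw [hc]
      simp [Complex.norm_real, Real.norm_eq_abs, abs_of_pos hν, mul_assoc]
    have habs : 0 < ‖s‖ := norm_pos_iff.2 hs0
    have hwb : ‖w y‖ ≤ ‖c‖ * (M / s.re + (Real.exp (-(s.re * y)) *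
        (M * (Real.exp (s.re * y) - 1) / s.re) + Real.exp (-(s.re * y)) * (M / s.re))) := by
      rw [hwdef]
      simp only
      calc ‖-c * (E y * (K - G y)) - c * (E' y * H y) + c * (E' y * K)‖
          ≤ ‖-c * (E y * (K - G y)) - c * (E' y * H y)‖ + ‖c * (E' y * K)‖ := norm_add_le _ _
      _ ≤ ‖-c * (E y * (K - G y))‖ + ‖c * (E' y * H y)‖ + ‖c * (E' y * K)‖ :=
            add_le_add_left (norm_sub_le _ _) _
      _ = ‖c‖ * ‖E y * (K - G y)‖ + (‖c‖ * ‖E' y * H y‖ + ‖c‖ * ‖E' y * K‖) := by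
            simp only [norm_neg, norm_mul]; ring
      _ ≤ ‖c‖ * (M / s.re) + (‖c‖ * (Real.exp (-(s.re * y)) *
            (M * (Real.exp (s.re * y) - 1) / s.re)) + ‖c‖ * (Real.exp (-(s.re * y)) * (M / s.re))) :=
            add_le_add (mul_le_mul_of_nonneg_left hT1 (norm_nonneg c))
              (add_le_add (mul_le_mul_of_nonneg_left hT2 (norm_nonneg c))
                (mul_le_mul_of_nonneg_left hT3 (norm_nonneg c)))
      _ = ‖c‖ * (M / s.re + (Real.exp (-(s.re * y)) * (M * (Real.exp (s.re * y) - 1) / s.re)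
            + Real.exp (-(s.re * y)) * (M / s.re))) := by ring
    rw [hvw y hy]
    refine hwb.trans (le_of_eq ?_)
    rw [hcnorm, Real.exp_neg]
    have hexp_ne : Real.exp (s.re * y) ≠ 0 := Real.exp_ne_zero _
    field_simp
    ring
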